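/- Let G be a finite group acting on a commutative k-algebra A, and let H ⊴ G be a normal subgroup. Then the skew Hecke algebra A^H{H\G/H} = End_{A⟨G⟩}(A{G/H})^op is isomorphic as a ring to the skew group ring (A^H)⟨G/H⟩ of the induced action of G/H on the H-invariants A^H. -/

import Mathlib

set_option maxHeartbeats 1000000
set_option synthInstance.maxHeartbeats 400000


/-- `B` is (isomorphic to) the skew group ring `R⟨G⟩` of the action
`σ : G →* RingAut R`: it contains `R` via `ι`, contains `G` as units via `u`,
with the intertwining relation `g · a = σ_g(a) · g`, and is free as a left
`R`-module with basis `G` (every element has a unique representation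
`Σ_g a_g · g`). -/
structure IsSkewGroupRing (R : Type*) [Ring R] (G : Type*) [Group G]
    (σ : G →* RingAut R) (B : Type*) [Ring B] : Type _ where
  ι : R →+* B
  u : G →* Bˣ
  comm : ∀ (g : G) (a : R), (u g : B) * ι a = ι (σ g a) * (u g : B)
  repr : ∀ b : B, ∃! f : G →₀ R, b = f.sum fun g a => ι a * (u g : B)

variable {A : Type*} [CommRing A] {G : Type*} [Group G] [MulSemiringAction G A]

/-- The semilinear action of `g ∈ G` on the free `A`-module `A{G/H}` on the coset
space `G/H`: `g • (Σ a_x · xH) = Σ (g • a_x) · (gx)H`. -/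
noncomputable def cosetAct (H : Subgroup G) (g : G) (f : (G ⧸ H) →₀ A) :
    (G ⧸ H) →₀ A :=
  Finsupp.mapDomain (fun x => g • x) (Finsupp.mapRange (fun a => g • a) (smul_zero g) f)

/-- The subring of `H`-invariants `A^H` of `A`. -/
def fixedSubring (H : Subgroup G) : Subring A where
  carrier := {a | ∀ h ∈ H, h • a = a}
  add_mem' := by
    intro a b ha hb h hh
    rw [smul_add, ha h hh, hb h hh]
  mul_mem' := by
    intro a b ha hb h hh
    rw [smul_mul', ha h hh, hb h hh]
  one_mem' := fun h _ => smul_one h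
  zero_mem' := fun h _ => smul_zero h
  neg_mem' := by
    intro a ha h hh
    rw [smul_neg, ha h hh]

lemma cosetAct_add (H : Subgroup G) (g : G) (f₁ f₂ : (G ⧸ H) →₀ A) :
    cosetAct H g (f₁ + f₂) = cosetAct H g f₁ + cosetAct H g f₂ := by
  unfold cosetAct
  rw [Finsupp.mapRange_add (smul_add g), Finsupp.mapDomain_add]

lemma cosetAct_zero (H : Subgroup G) (g : G) :
    cosetAct H g (0 : (G ⧸ H) →₀ A) = 0 := by
  unfold cosetAct
  rw [Finsupp.mapRange_zero, Finsupp.mapDomain_zero]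

lemma cosetAct_neg (H : Subgroup G) (g : G) (f : (G ⧸ H) →₀ A) :
    cosetAct H g (-f) = -cosetAct H g f := by
  have h := cosetAct_add H g f (-f)
  rw [add_neg_cancel, cosetAct_zero] at h
  exact (neg_eq_of_add_eq_zero_right h.symm).symm

/-- The skew Hecke algebra `End_{A⟨G⟩}(A{G/H})`, realised as the subring of
`End_A(A{G/H})` consisting of the endomorphisms commuting with the semilinear
`G`-action. -/
noncomputable def heckeEnd (H : Subgroup G) :
    Subring (Module.End A ((G ⧸ H) →₀ A)) where
  carrier := {φ | ∀ (g : G) (f : (G ⧸ H) →₀ A), φ (cosetAct H g f) = cosetAct H g (φ f)}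
  add_mem' := by
    intro φ ψ hφ hψ g f
    show φ (cosetAct H g f) + ψ (cosetAct H g f) = cosetAct H g (φ f + ψ f)
    rw [hφ g f, hψ g f, cosetAct_add]
  mul_mem' := by
    intro φ ψ hφ hψ g f
    show φ (ψ (cosetAct H g f)) = cosetAct H g (φ (ψ f))
    rw [hψ g f, hφ g (ψ f)]
  one_mem' := fun _ _ => rfl
  zero_mem' := by
    intro g f
    show (0 : (G ⧸ H) →₀ A) = cosetAct H g 0
    rw [cosetAct_zero]
  neg_mem' := by
    intro φ hφ g f
    show -(φ (cosetAct H g f)) = cosetAct H g (-(φ f))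
    rw [hφ g f, cosetAct_neg]


section SkewHeckeAux

open Finsupp MulOpposite

variable (H : Subgroup G)

lemma cosetAct_single (g : G) (x : G ⧸ H) (a : A) :
    cosetAct H g (Finsupp.single x a) = Finsupp.single (g • x) (g • a) := by
  unfold cosetAct
  rw [Finsupp.mapRange_single, Finsupp.mapDomain_single]

lemma cosetAct_comp (g g' : G) (f : (G ⧸ H) →₀ A) :
    cosetAct H (g * g') f = cosetAct H g (cosetAct H g' f) := by
  induction f using Finsupp.induction_linear with
  | zero => rw [cosetAct_zero, cosetAct_zero, cosetAct_zero]
  | add f₁ f₂ h1 h2 => rw [cosetAct_add, cosetAct_add, cosetAct_add, h1, h2]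
  | single x a =>
      rw [cosetAct_single, cosetAct_single, cosetAct_single, mul_smul, mul_smul]

lemma cosetAct_smulA (g : G) (b : A) (f : (G ⧸ H) →₀ A) :
    cosetAct H g (b • f) = (g • b) • cosetAct H g f := by
  induction f using Finsupp.induction_linear with
  | zero => rw [smul_zero, cosetAct_zero, smul_zero]
  | add f₁ f₂ h1 h2 => rw [smul_add, cosetAct_add, h1, h2, cosetAct_add, smul_add]
  | single x a =>
      rw [Finsupp.smul_single, cosetAct_single, cosetAct_single, Finsupp.smul_single,
        smul_eq_mul, smul_eq_mul, smul_mul']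

lemma smul_quot_eq [H.Normal] (g : G) (x : G ⧸ H) : g • x = (g : G ⧸ H) * x := by
  induction x using QuotientGroup.induction_on with
  | H a => rw [MulAction.Quotient.smul_mk, smul_eq_mul, QuotientGroup.mk_mul]

lemma smul_coset_of_mem [H.Normal] {h : G} (hh : h ∈ H) (x : G ⧸ H) : h • x = x := by
  induction x using QuotientGroup.induction_on with
  | H g =>
      rw [MulAction.Quotient.smul_mk]
      apply (QuotientGroup.eq).mpr
      have := ‹H.Normal›.conj_mem h⁻¹ (inv_mem hh) g⁻¹
      simpa [mul_inv_rev, mul_assoc] using this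

lemma smul_congr_of_fixed [H.Normal] {g₁ g₂ : G} (hg : (g₁ : G ⧸ H) = g₂) {a : A}
    (ha : ∀ h ∈ H, h • a = a) : g₁ • a = g₂ • a := by
  have hmem : g₁⁻¹ * g₂ ∈ H := QuotientGroup.eq.mp hg
  have h2 : g₂ = g₁ * (g₁⁻¹ * g₂) := by group
  rw [h2, mul_smul, ha _ hmem]

lemma cosetAct_apply_smul (g : G) (f : (G ⧸ H) →₀ A) (x : G ⧸ H) :
    cosetAct H g f (g • x) = g • f x := by
  unfold cosetAct
  rw [Finsupp.mapDomain_apply (MulAction.injective g), Finsupp.mapRange_apply]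

lemma cosetAct_of_mem [H.Normal] {h : G} (hh : h ∈ H) (f : (G ⧸ H) →₀ A)
    (hf : ∀ x, ∀ h' ∈ H, h' • f x = f x) : cosetAct H h f = f := by
  ext x
  conv_lhs => rw [← smul_coset_of_mem H hh x]
  rw [cosetAct_apply_smul, hf x h hh]

lemma cosetAct_congr [H.Normal] {g₁ g₂ : G} (hg : (g₁ : G ⧸ H) = g₂) (f : (G ⧸ H) →₀ A)
    (hf : ∀ x, ∀ h' ∈ H, h' • f x = f x) : cosetAct H g₁ f = cosetAct H g₂ f := by
  have hmem : g₁⁻¹ * g₂ ∈ H := QuotientGroup.eq.mp hg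
  have h2 : g₂ = g₁ * (g₁⁻¹ * g₂) := by group
  conv_rhs => rw [h2]
  rw [cosetAct_comp, cosetAct_of_mem H hmem f hf]

/-- Lift of a finsupp with `A^H`-coefficients to `A`-coefficients. -/
noncomputable def liftF (F : (G ⧸ H) →₀ fixedSubring (A := A) H) : (G ⧸ H) →₀ A :=
  F.mapRange Subtype.val rfl

lemma liftF_apply (F : (G ⧸ H) →₀ fixedSubring (A := A) H) (x : G ⧸ H) :
    liftF H F x = (F x : A) := Finsupp.mapRange_apply

lemma liftF_fixed (F : (G ⧸ H) →₀ fixedSubring (A := A) H) :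
    ∀ x, ∀ h' ∈ H, h' • liftF H F x = liftF H F x := by
  intro x h' hh
  rw [liftF_apply]
  exact (F x).2 h' hh

lemma liftF_single (x : G ⧸ H) (c : fixedSubring (A := A) H) :
    liftF H (Finsupp.single x c) = Finsupp.single x (c : A) := by
  unfold liftF
  rw [Finsupp.mapRange_single]

/-- The `A`-linear endomorphism of `A{G/H}` attached to `f : (G⧸H) →₀ A^H`. -/
noncomputable def phiF (F : (G ⧸ H) →₀ fixedSubring (A := A) H) :
    ((G ⧸ H) →₀ A) →ₗ[A] ((G ⧸ H) →₀ A) :=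
  Finsupp.lsum A fun x => (LinearMap.id : A →ₗ[A] A).smulRight (cosetAct H x.out (liftF H F))

lemma phiF_single (F : (G ⧸ H) →₀ fixedSubring (A := A) H) (x : G ⧸ H) (a : A) :
    phiF H F (Finsupp.single x a) = a • cosetAct H x.out (liftF H F) := by
  rw [phiF, Finsupp.lsum_single]
  rfl

lemma phiF_equivariant [H.Normal] (F : (G ⧸ H) →₀ fixedSubring (A := A) H) (g : G)
    (w : (G ⧸ H) →₀ A) : phiF H F (cosetAct H g w) = cosetAct H g (phiF H F w) := by
  induction w using Finsupp.induction_linear with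
  | zero => rw [cosetAct_zero, map_zero, cosetAct_zero]
  | add f₁ f₂ h1 h2 => rw [cosetAct_add, map_add, map_add, h1, h2, cosetAct_add]
  | single x a =>
      rw [cosetAct_single, phiF_single, phiF_single, cosetAct_smulA, ← cosetAct_comp]
      congr 1
      apply cosetAct_congr H _ _ (liftF_fixed H F)
      rw [QuotientGroup.out_eq', QuotientGroup.mk_mul, QuotientGroup.out_eq', smul_quot_eq]

/-- The element of the Hecke algebra attached to `f : (G⧸H) →₀ A^H`. -/
noncomputable def PhiH [H.Normal] (F : (G ⧸ H) →₀ fixedSubring (A := A) H) :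
    heckeEnd (A := A) H :=
  ⟨phiF H F, fun g f => phiF_equivariant H F g f⟩

lemma PhiH_coe [H.Normal] (F : (G ⧸ H) →₀ fixedSubring (A := A) H) :
    ((PhiH H F : heckeEnd (A := A) H) : Module.End A ((G ⧸ H) →₀ A)) = phiF H F := rfl

lemma phiF_single_single [H.Normal] (y : G ⧸ H) (c : fixedSubring (A := A) H)
    (x : G ⧸ H) (a : A) :
    phiF H (Finsupp.single y c) (Finsupp.single x a)
      = Finsupp.single (x * y) (a * x.out • (c : A)) := by
  rw [phiF_single, liftF_single, cosetAct_single, Finsupp.smul_single, smul_eq_mul,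
    smul_quot_eq, QuotientGroup.out_eq']

lemma out_one_smul_fixed [H.Normal] (c : fixedSubring (A := A) H) :
    (1 : G ⧸ H).out • (c : A) = (c : A) :=
  c.2 _ ((QuotientGroup.eq_one_iff _).mp (QuotientGroup.out_eq' 1))

lemma hecke_apply_single [H.Normal] (φ : heckeEnd (A := A) H) (g : G) (a : A) :
    (φ : Module.End A ((G ⧸ H) →₀ A)) (Finsupp.single ((g : G ⧸ H)) a)
      = a • cosetAct H g ((φ : Module.End A ((G ⧸ H) →₀ A))
          (Finsupp.single (1 : G ⧸ H) (1 : A))) := by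
  have h1 : cosetAct H g (Finsupp.single (1 : G ⧸ H) (1 : A))
      = Finsupp.single ((g : G ⧸ H)) (1 : A) := by
    rw [cosetAct_single, smul_one, smul_quot_eq, mul_one]
  have h2 : Finsupp.single ((g : G ⧸ H)) a
      = a • cosetAct H g (Finsupp.single (1 : G ⧸ H) (1 : A)) := by
    rw [h1, Finsupp.smul_single, smul_eq_mul, mul_one]
  rw [h2, map_smul, φ.2 g]

lemma hecke_ext [H.Normal] {φ ψ : heckeEnd (A := A) H}
    (h : (φ : Module.End A ((G ⧸ H) →₀ A)) (Finsupp.single (1 : G ⧸ H) (1 : A))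
       = (ψ : Module.End A ((G ⧸ H) →₀ A)) (Finsupp.single (1 : G ⧸ H) (1 : A))) :
    φ = ψ := by
  apply Subtype.ext
  apply Finsupp.lhom_ext
  intro x a
  rw [← QuotientGroup.out_eq' x, hecke_apply_single, hecke_apply_single, h]

/-- Evaluation at the basis vector `1·H`, as an additive map. -/
noncomputable def EvecHom [H.Normal] :
    (heckeEnd (A := A) H)ᵐᵒᵖ →+ ((G ⧸ H) →₀ A) where
  toFun b := ((MulOpposite.unop b : heckeEnd (A := A) H) :
      Module.End A ((G ⧸ H) →₀ A)) (Finsupp.single (1 : G ⧸ H) (1 : A))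
  map_zero' := rfl
  map_add' x y := rfl

lemma EvecHom_apply [H.Normal] (b : (heckeEnd (A := A) H)ᵐᵒᵖ) :
    EvecHom H b = ((MulOpposite.unop b : heckeEnd (A := A) H) :
      Module.End A ((G ⧸ H) →₀ A)) (Finsupp.single (1 : G ⧸ H) (1 : A)) := rfl

lemma EvecHom_injective [H.Normal] :
    Function.Injective (EvecHom (A := A) H) := by
  intro b b' hb
  rw [EvecHom_apply, EvecHom_apply] at hb
  exact MulOpposite.unop_injective (hecke_ext H hb)

/-- The ring embedding of `A^H` into the opposite Hecke algebra. -/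
noncomputable def iotaH [H.Normal] :
    fixedSubring (A := A) H →+* (heckeEnd (A := A) H)ᵐᵒᵖ where
  toFun a := MulOpposite.op (PhiH H (Finsupp.single 1 a))
  map_one' := by
    rw [← MulOpposite.op_one]
    refine congrArg MulOpposite.op (hecke_ext H ?_)
    rw [PhiH_coe, phiF_single_single]
    simp [out_one_smul_fixed]
  map_mul' a b := by
    rw [← MulOpposite.op_mul]
    refine congrArg MulOpposite.op (hecke_ext H ?_)
    have hmul : ((PhiH H (Finsupp.single 1 b) * PhiH H (Finsupp.single 1 a) :
        heckeEnd (A := A) H) : Module.End A ((G ⧸ H) →₀ A))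
        = phiF H (Finsupp.single 1 b) * phiF H (Finsupp.single 1 a) := rfl
    rw [PhiH_coe, hmul, Module.End.mul_apply, phiF_single_single, phiF_single_single,
      phiF_single_single]
    simp [out_one_smul_fixed, mul_assoc]
  map_zero' := by
    rw [← MulOpposite.op_zero]
    refine congrArg MulOpposite.op (hecke_ext H ?_)
    rw [PhiH_coe, phiF_single_single]
    simp
  map_add' a b := by
    rw [← MulOpposite.op_add]
    refine congrArg MulOpposite.op (hecke_ext H ?_)
    have hadd : ((PhiH H (Finsupp.single 1 a) + PhiH H (Finsupp.single 1 b) :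
        heckeEnd (A := A) H) : Module.End A ((G ⧸ H) →₀ A))
        = phiF H (Finsupp.single 1 a) + phiF H (Finsupp.single 1 b) := rfl
    rw [PhiH_coe, hadd, LinearMap.add_apply, phiF_single_single, phiF_single_single,
      phiF_single_single]
    simp [out_one_smul_fixed, Finsupp.single_add, smul_add, mul_add]

/-- The invertible element of the Hecke algebra attached to a coset. -/
noncomputable def uH [H.Normal] (x : G ⧸ H) : heckeEnd (A := A) H :=
  PhiH H (Finsupp.single x 1)

lemma uH_apply_single [H.Normal] (x z : G ⧸ H) (c : A) :
    ((uH H x : heckeEnd (A := A) H) : Module.End A ((G ⧸ H) →₀ A)) (Finsupp.single z c)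
      = Finsupp.single (z * x) c := by
  rw [uH, PhiH_coe, phiF_single_single]
  simp

lemma uH_mul [H.Normal] (x y : G ⧸ H) :
    uH (A := A) H y * uH (A := A) H x = uH (A := A) H (x * y) := by
  refine hecke_ext H ?_
  have hmul : ((uH H y * uH H x : heckeEnd (A := A) H) :
      Module.End A ((G ⧸ H) →₀ A))
      = ((uH H y : heckeEnd (A := A) H) : Module.End A ((G ⧸ H) →₀ A))
        * ((uH H x : heckeEnd (A := A) H) : Module.End A ((G ⧸ H) →₀ A)) := rfl
  rw [hmul, Module.End.mul_apply, uH_apply_single, uH_apply_single, uH_apply_single,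
    one_mul, one_mul]

lemma uH_one [H.Normal] : uH (A := A) H 1 = 1 := by
  refine hecke_ext H ?_
  rw [uH_apply_single, mul_one]
  rfl

/-- The group of invertible coset operators, as a monoid hom. -/
noncomputable def uUnits [H.Normal] : (G ⧸ H) →* ((heckeEnd (A := A) H)ᵐᵒᵖ)ˣ where
  toFun x :=
    { val := MulOpposite.op (uH H x)
      inv := MulOpposite.op (uH H x⁻¹)
      val_inv := by
        rw [← MulOpposite.op_mul, uH_mul, mul_inv_cancel, uH_one, MulOpposite.op_one]
      inv_val := by
        rw [← MulOpposite.op_mul, uH_mul, inv_mul_cancel, uH_one, MulOpposite.op_one] }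
  map_one' := by
    refine Units.ext ?_
    show MulOpposite.op (uH H 1) = 1
    rw [uH_one, MulOpposite.op_one]
  map_mul' x y := by
    refine Units.ext ?_
    show MulOpposite.op (uH H (x * y)) = MulOpposite.op (uH H x) * MulOpposite.op (uH H y)
    rw [← MulOpposite.op_mul, uH_mul]

lemma smul_mem_fixed [H.Normal] (g : G) {a : A} (ha : ∀ h ∈ H, h • a = a) :
    ∀ h ∈ H, h • (g • a) = g • a := by
  intro h hh
  have hm : g⁻¹ * h * g ∈ H := by
    have := ‹H.Normal›.conj_mem h hh g⁻¹
    simpa using this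
  calc h • g • a = (h * g) • a := (mul_smul h g a).symm
    _ = (g * (g⁻¹ * h * g)) • a := by
        congr 1
        group
    _ = g • ((g⁻¹ * h * g) • a) := mul_smul _ _ _
    _ = g • a := by rw [ha _ hm]

/-- The ring automorphism of `A^H` induced by `g : G`. -/
def sigmaAut [H.Normal] (g : G) :
    fixedSubring (A := A) H ≃+* fixedSubring (A := A) H where
  toFun a := ⟨g • (a : A), smul_mem_fixed H g a.2⟩
  invFun a := ⟨g⁻¹ • (a : A), smul_mem_fixed H g⁻¹ a.2⟩
  left_inv a := Subtype.ext (inv_smul_smul g (a : A))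
  right_inv a := Subtype.ext (smul_inv_smul g (a : A))
  map_mul' a b := Subtype.ext (smul_mul' g (a : A) (b : A))
  map_add' a b := Subtype.ext (smul_add g (a : A) (b : A))

/-- `G` acting on `A^H` by ring automorphisms. -/
def sigmaHom [H.Normal] : G →* RingAut (fixedSubring (A := A) H) where
  toFun := sigmaAut H
  map_one' := by
    apply RingEquiv.ext
    intro a
    exact Subtype.ext (one_smul G (a : A))
  map_mul' g g' := by
    apply RingEquiv.ext
    intro a
    exact Subtype.ext (mul_smul g g' (a : A))

/-- The induced action of `G/H` on `A^H`. -/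
noncomputable def tauHom [H.Normal] : (G ⧸ H) →* RingAut (fixedSubring (A := A) H) :=
  QuotientGroup.lift H (sigmaHom H)
    (fun h hh => by
      apply RingEquiv.ext
      intro a
      exact Subtype.ext (a.2 h hh))

lemma tauHom_mk [H.Normal] (g : G) (a : fixedSubring (A := A) H) :
    ((tauHom H (g : G ⧸ H) a : fixedSubring (A := A) H) : A) = g • (a : A) := rfl

lemma Evec_iota_mul_u [H.Normal] (a : fixedSubring (A := A) H) (g : G ⧸ H) :
    EvecHom H (iotaH H a * ((uUnits H g : ((heckeEnd (A := A) H)ᵐᵒᵖ)ˣ) :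
        (heckeEnd (A := A) H)ᵐᵒᵖ))
      = Finsupp.single g (a : A) := by
  show ((uH H g * PhiH H (Finsupp.single 1 a) : heckeEnd (A := A) H) :
      Module.End A ((G ⧸ H) →₀ A)) (Finsupp.single (1 : G ⧸ H) (1 : A))
      = Finsupp.single g (a : A)
  have hmul : ((uH H g * PhiH H (Finsupp.single 1 a) : heckeEnd (A := A) H) :
      Module.End A ((G ⧸ H) →₀ A))
      = ((uH H g : heckeEnd (A := A) H) : Module.End A ((G ⧸ H) →₀ A))
        * phiF H (Finsupp.single 1 a) := rfl
  rw [hmul, Module.End.mul_apply, phiF_single_single, one_mul, one_mul,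
    out_one_smul_fixed, uH_apply_single, one_mul]

lemma sum_single_coe (F : (G ⧸ H) →₀ fixedSubring (A := A) H) :
    (F.sum fun g a => Finsupp.single g (a : A)) = liftF H F := by
  classical
  induction F using Finsupp.induction_linear with
  | zero => simp [liftF]
  | add f₁ f₂ h1 h2 =>
      rw [Finsupp.sum_add_index (by intros; simp) (by intros; simp [Finsupp.single_add]),
        h1, h2]
      unfold liftF
      rw [Finsupp.mapRange_add (fun x y => rfl)]
  | single x c =>
      rw [Finsupp.sum_single_index (by simp), liftF_single]

end SkewHeckeAux

/-- Let `G` be a finite group acting on a commutative `k`-algebra `A` (by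
`k`-algebra automorphisms), and let `H ⊴ G` be a normal subgroup.  Then the skew
Hecke algebra `A^H{H\G/H} = End_{A⟨G⟩}(A{G/H})ᵒᵖ` is isomorphic as a ring to the
skew group ring `(A^H)⟨G/H⟩` of the induced action of `G/H` on the `H`-invariants
`A^H`. -/
theorem heckeEnd_isSkewGroupRing
    (k : Type*) [CommRing k] [Algebra k A]
    [Finite G]
    (halg : ∀ (g : G) (c : k), g • (algebraMap k A c) = algebraMap k A c)
    (H : Subgroup G) [H.Normal] :
    ∃ τ : (G ⧸ H) →* RingAut (fixedSubring (A := A) H),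
      (∀ (g : G) (a : fixedSubring (A := A) H),
          ((τ (g : G ⧸ H) a : fixedSubring (A := A) H) : A) = g • (a : A)) ∧
      Nonempty (IsSkewGroupRing (fixedSubring (A := A) H) (G ⧸ H) τ
        ((heckeEnd (A := A) H)ᵐᵒᵖ)) := by
  classical
  refine ⟨tauHom H, fun g a => tauHom_mk H g a, ⟨?_⟩⟩
  refine
    { ι := iotaH H
      u := uUnits H
      comm := ?_
      repr := ?_ }
  · intro g a
    induction g using QuotientGroup.induction_on with
    | H g0 =>
      show MulOpposite.op (uH (A := A) H (g0 : G ⧸ H)) *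
          MulOpposite.op (PhiH H (Finsupp.single 1 a))
        = MulOpposite.op (PhiH H (Finsupp.single 1 (tauHom H (g0 : G ⧸ H) a))) *
          MulOpposite.op (uH (A := A) H (g0 : G ⧸ H))
      rw [← MulOpposite.op_mul, ← MulOpposite.op_mul]
      refine congrArg MulOpposite.op (hecke_ext H ?_)
      have h1 : ((PhiH H (Finsupp.single 1 a) * uH H (g0 : G ⧸ H) :
          heckeEnd (A := A) H) : Module.End A ((G ⧸ H) →₀ A))
          = phiF H (Finsupp.single 1 a) *
            ((uH H (g0 : G ⧸ H) : heckeEnd (A := A) H) :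
              Module.End A ((G ⧸ H) →₀ A)) := rfl
      have h2 : ((uH H (g0 : G ⧸ H) * PhiH H (Finsupp.single 1
            (tauHom H (g0 : G ⧸ H) a)) : heckeEnd (A := A) H) :
          Module.End A ((G ⧸ H) →₀ A))
          = ((uH H (g0 : G ⧸ H) : heckeEnd (A := A) H) :
              Module.End A ((G ⧸ H) →₀ A)) *
            phiF H (Finsupp.single 1 (tauHom H (g0 : G ⧸ H) a)) := rfl
      rw [h1, h2, Module.End.mul_apply, Module.End.mul_apply, uH_apply_single, one_mul,
        phiF_single_single, phiF_single_single, one_mul, one_mul, uH_apply_single,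
        out_one_smul_fixed, tauHom_mk]
      simp only [mul_one, one_mul]
      congr 1
      refine smul_congr_of_fixed H ?_ a.2
      rw [QuotientGroup.out_eq']
  · intro b
    set v : (G ⧸ H) →₀ A := EvecHom H b with hvdef
    have hfix : ∀ x, ∀ h ∈ H, h • v x = v x := by
      intro x h hh
      have hcv : cosetAct H h v = v := by
        have he : cosetAct H h (Finsupp.single (1 : G ⧸ H) (1 : A))
            = Finsupp.single (1 : G ⧸ H) (1 : A) := by
          rw [cosetAct_single, smul_one, smul_coset_of_mem H hh]
        have := (MulOpposite.unop b).2 h (Finsupp.single (1 : G ⧸ H) (1 : A))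
        rw [he] at this
        exact this.symm
      conv_rhs => rw [← hcv]
      conv_rhs => rw [← smul_coset_of_mem H hh x]
      rw [cosetAct_apply_smul]
    set F : (G ⧸ H) →₀ fixedSubring (A := A) H :=
      ⟨v.support, fun x => ⟨v x, hfix x⟩, fun x => by
        simp [Finsupp.mem_support_iff, Subtype.ext_iff]⟩ with hFdef
    have hliftF : liftF H F = v := by
      ext x
      rw [liftF_apply]
      rfl
    have hkey : ∀ f : (G ⧸ H) →₀ fixedSubring (A := A) H,
        EvecHom H (f.sum fun g a => iotaH H a *
          ((uUnits H g : ((heckeEnd (A := A) H)ᵐᵒᵖ)ˣ) : (heckeEnd (A := A) H)ᵐᵒᵖ))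
        = liftF H f := by
      intro f
      rw [map_finsuppSum]
      rw [← sum_single_coe]
      exact Finsupp.sum_congr fun g _ => Evec_iota_mul_u H (f g) g
    refine ⟨F, ?_, ?_⟩
    · apply EvecHom_injective H
      rw [hkey F, hliftF]
    · intro f' hf'
      have hv' : liftF H f' = v := by
        rw [← hkey f', ← hf']
      ext x
      rw [← liftF_apply H f', hv']
      rfl
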